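/- For every real number R > 0 and every integer n ≥ 1, the sum over all tuples (k_1,…,k_n) of nonnegative integers satisfying k_1 + 2k_2 + ⋯ + n k_n = n of (k_1+k_2+⋯+k_n)!/(k_1! k_2! ⋯ k_n!) · R^{k_1+k_2+⋯+k_n} equals R(R+1)^{n-1}. -/

import Mathlib

open Finset

/-- weight of a multiplicity vector -/
noncomputable def faaW (R : ℝ) (n : ℕ) (k : Fin n → ℕ) : ℝ :=
  (((∑ i, k i).factorial : ℝ) / ∏ i, ((k i).factorial : ℝ)) * R ^ (∑ i, k i)

/-- multiplicity vectors of total weighted sum `m` -/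
def faaC (n m : ℕ) : Finset (Fin n → ℕ) :=
  (Fintype.piFinset fun _ => Finset.range (n + 1)).filter fun k => ∑ i, (i.1 + 1) * k i = m

noncomputable def faaS (R : ℝ) (n m : ℕ) : ℝ := ∑ k ∈ faaC n m, faaW R n k

lemma faaProd_pos (n : ℕ) (k : Fin n → ℕ) : (0:ℝ) < ∏ i, ((k i).factorial : ℝ) :=
  Finset.prod_pos fun i _ => by exact_mod_cast (k i).factorial_pos

lemma faaW_rec (R : ℝ) (n : ℕ) (k : Fin n → ℕ) (hk : 1 ≤ ∑ i, k i) :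
    faaW R n k = ∑ j ∈ univ.filter fun j => 1 ≤ k j,
      R * faaW R n (Function.update k j (k j - 1)) := by
  have key : ∀ j : Fin n, 1 ≤ k j →
      R * faaW R n (Function.update k j (k j - 1))
        = (k j : ℝ) * ((((∑ i, k i) - 1).factorial : ℝ) / ∏ i, ((k i).factorial : ℝ))
            * R ^ (∑ i, k i) := by
    intro j hj
    have hsum : ∑ i, Function.update k j (k j - 1) i = (∑ i, k i) - 1 := by
      rw [Finset.sum_update_of_mem (mem_univ j)]
      have := Finset.sum_update_of_mem (mem_univ j) k (k j)
      simp only [Function.update_self, Function.update_eq_self] at this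
      omega
    have hprod : ∏ i, ((Function.update k j (k j - 1) i).factorial : ℝ)
        = ((k j - 1).factorial : ℝ) * ∏ i ∈ univ.erase j, ((k i).factorial : ℝ) := by
      have he : (fun i => ((Function.update k j (k j - 1) i).factorial : ℝ))
          = Function.update (fun i => ((k i).factorial : ℝ)) j (((k j - 1).factorial : ℝ)) := by
        funext i
        simp only [Function.update_apply]
        split_ifs with h <;> simp [h]
      rw [show ∏ i, ((Function.update k j (k j - 1) i).factorial : ℝ)
          = ∏ i, Function.update (fun i => ((k i).factorial : ℝ)) j
              (((k j - 1).factorial : ℝ)) i from by rw [← he]]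
      rw [Finset.prod_update_of_mem (mem_univ j)]
      rw [Finset.sdiff_singleton_eq_erase]
    have hprodk : ∏ i, ((k i).factorial : ℝ)
        = ((k j).factorial : ℝ) * ∏ i ∈ univ.erase j, ((k i).factorial : ℝ) := by
      rw [← Finset.mul_prod_erase univ _ (mem_univ j)]
    have hfac : ((k j).factorial : ℝ) = (k j : ℝ) * ((k j - 1).factorial : ℝ) := by
      exact_mod_cast (Nat.mul_factorial_pred (Nat.one_le_iff_ne_zero.mp hj)).symm
    have hpow : R ^ (∑ i, k i) = R * R ^ ((∑ i, k i) - 1) := by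
      rw [← pow_succ']
      congr 1
      omega
    rw [faaW, hsum, hprod, hprodk, hfac, hpow]
    have h1 : ((k j - 1).factorial : ℝ) ≠ 0 := by positivity
    have h2 : (0:ℝ) < ∏ i ∈ univ.erase j, ((k i).factorial : ℝ) :=
      Finset.prod_pos fun i _ => by exact_mod_cast (k i).factorial_pos
    field_simp
  rw [Finset.sum_congr rfl fun j hj => key j (by simpa using hj)]
  rw [Finset.sum_filter]
  have : ∀ j : Fin n, (if 1 ≤ k j then
      (k j : ℝ) * ((((∑ i, k i) - 1).factorial : ℝ) / ∏ i, ((k i).factorial : ℝ))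
        * R ^ (∑ i, k i) else 0)
      = (k j : ℝ) * ((((∑ i, k i) - 1).factorial : ℝ) / ∏ i, ((k i).factorial : ℝ))
        * R ^ (∑ i, k i) := by
    intro j
    split_ifs with h
    · rfl
    · have : k j = 0 := by omega
      simp [this]
  rw [Finset.sum_congr rfl fun j _ => this j, ← Finset.sum_mul, ← Finset.sum_mul]
  have hcast : (∑ j, (k j : ℝ)) = ((∑ j, k j : ℕ) : ℝ) := by push_cast; ring
  rw [hcast, faaW]
  have : ((∑ j, k j : ℕ) : ℝ) * (((∑ i, k i) - 1).factorial : ℝ)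
      = (((∑ i, k i).factorial : ℝ)) := by
    exact_mod_cast congrArg (Nat.cast (R := ℝ)) (Nat.mul_factorial_pred (Nat.one_le_iff_ne_zero.mp hk))
  rw [← this]
  ring


lemma faaS_zero (R : ℝ) (n : ℕ) : faaS R n 0 = 1 := by
  have hC : faaC n 0 = {fun _ => 0} := by
    ext k
    simp only [faaC, mem_filter, Fintype.mem_piFinset, mem_range, mem_singleton]
    constructor
    · rintro ⟨-, h⟩
      funext i
      have := (Finset.sum_eq_zero_iff.mp h) i (mem_univ i)
      rcases Nat.mul_eq_zero.mp this with h' | h'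
      · omega
      · exact h'
    · rintro rfl
      simp
  rw [faaS, hC]
  simp [faaW]

lemma faaSum_update (n : ℕ) (k : Fin n → ℕ) (j : Fin n) (v : ℕ) :
    ∑ i, (i.1 + 1) * Function.update k j v i
      = (j.1 + 1) * v + ∑ i ∈ univ.erase j, (i.1 + 1) * k i := by
  have he : (fun i : Fin n => (i.1 + 1) * Function.update k j v i)
      = Function.update (fun i : Fin n => (i.1 + 1) * k i) j ((j.1 + 1) * v) := by
    funext i
    simp only [Function.update_apply]
    split_ifs with h <;> simp [h]
  rw [show ∑ i, (i.1 + 1) * Function.update k j v i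
      = ∑ i, Function.update (fun i : Fin n => (i.1 + 1) * k i) j ((j.1 + 1) * v) i from by
        rw [← he]]
  rw [Finset.sum_update_of_mem (mem_univ j), Finset.sdiff_singleton_eq_erase]

lemma faaSum_split (n : ℕ) (k : Fin n → ℕ) (j : Fin n) :
    ∑ i, (i.1 + 1) * k i = (j.1 + 1) * k j + ∑ i ∈ univ.erase j, (i.1 + 1) * k i := by
  exact (Finset.add_sum_erase univ (fun i : Fin n => (i.1 + 1) * k i) (mem_univ j)).symm

lemma faaS_rec (R : ℝ) (n m : ℕ) (hm : 1 ≤ m) (hmn : m ≤ n) :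
    faaS R n m = R * ∑ j ∈ Finset.range m, faaS R n (m - 1 - j) := by
  have h1 : ∀ k ∈ faaC n m, 1 ≤ ∑ i, k i := by
    intro k hk
    simp only [faaC, mem_filter] at hk
    by_contra h
    have hz : ∑ i, k i = 0 := by omega
    have : ∑ i, (i.1 + 1) * k i = 0 := by
      apply Finset.sum_eq_zero
      intro i _
      have := (Finset.sum_eq_zero_iff.mp hz) i (mem_univ i)
      simp [this]
    omega
  rw [faaS, Finset.sum_congr rfl fun k hk => faaW_rec R n k (h1 k hk)]
  have swap : ∑ k ∈ faaC n m, ∑ j ∈ univ.filter fun j => 1 ≤ k j,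
        R * faaW R n (Function.update k j (k j - 1))
      = ∑ j : Fin n, ∑ k ∈ (faaC n m).filter fun k => 1 ≤ k j,
        R * faaW R n (Function.update k j (k j - 1)) := by
    simp_rw [Finset.sum_filter]
    rw [Finset.sum_comm]
  rw [swap]
  have key : ∀ j : Fin n,
      ∑ k ∈ (faaC n m).filter fun k => 1 ≤ k j,
          faaW R n (Function.update k j (k j - 1))
        = if j.1 + 1 ≤ m then faaS R n (m - (j.1 + 1)) else 0 := by
    intro j
    split_ifs with hle
    · rw [faaS]
      apply Finset.sum_nbij' (fun k => Function.update k j (k j - 1))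
        (fun k => Function.update k j (k j + 1))
      · -- hi
        intro k hk
        simp only [mem_filter, faaC, Fintype.mem_piFinset, mem_range] at hk ⊢
        obtain ⟨⟨hpi, hsum⟩, hj⟩ := hk
        refine ⟨fun i => ?_, ?_⟩
        · rcases eq_or_ne i j with rfl | h
          · simp only [Function.update_self]
            exact lt_of_le_of_lt (Nat.sub_le _ _) (hpi i)
          · simp only [Function.update_of_ne h]
            exact hpi i
        · rw [faaSum_update]
          rw [faaSum_split n k j] at hsum
          obtain ⟨t, ht⟩ : ∃ t, k j = t + 1 := ⟨k j - 1, by omega⟩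
          rw [ht]
          simp only [Nat.add_sub_cancel]
          rw [ht, Nat.mul_add, mul_one] at hsum
          omega
      · -- hj
        intro k hk
        simp only [mem_filter, faaC, Fintype.mem_piFinset, mem_range] at hk ⊢
        obtain ⟨hpi, hsum⟩ := hk
        have hsingle : (j.1 + 1) * k j ≤ ∑ i, (i.1 + 1) * k i :=
          Finset.single_le_sum (f := fun i : Fin n => (i.1 + 1) * k i)
            (fun i _ => Nat.zero_le _) (mem_univ j)
        have hkj : k j ≤ (j.1 + 1) * k j := Nat.le_mul_of_pos_left _ (Nat.succ_pos _)
        refine ⟨⟨fun i => ?_, ?_⟩, ?_⟩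
        · rcases eq_or_ne i j with rfl | h
          · simp only [Function.update_self]
            omega
          · simp only [Function.update_of_ne h]
            exact hpi i
        · rw [faaSum_update, faaSum_split n k j] at *
          rw [Nat.mul_add, mul_one]
          omega
        · simp
      · -- left_inv
        intro k hk
        simp only [mem_filter] at hk
        rw [Function.update_idem, Function.update_self]
        rw [show k j - 1 + 1 = k j by omega, Function.update_eq_self]
      · -- right_inv
        intro k hk
        rw [Function.update_idem, Function.update_self, Nat.add_sub_cancel,
          Function.update_eq_self]
      · intro k hk
        rfl
    · apply Finset.sum_eq_zero
      intro k hk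
      exfalso
      simp only [mem_filter, faaC, Fintype.mem_piFinset, mem_range] at hk
      obtain ⟨⟨hpi, hsum⟩, hj⟩ := hk
      have hsingle : (j.1 + 1) * k j ≤ ∑ i, (i.1 + 1) * k i :=
        Finset.single_le_sum (f := fun i : Fin n => (i.1 + 1) * k i)
          (fun i _ => Nat.zero_le _) (mem_univ j)
      have : j.1 + 1 ≤ (j.1 + 1) * k j := Nat.le_mul_of_pos_right _ hj
      omega
  have factor : ∀ j : Fin n,
      ∑ k ∈ (faaC n m).filter fun k => 1 ≤ k j,
          R * faaW R n (Function.update k j (k j - 1))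
        = R * ((fun jv => if jv + 1 ≤ m then faaS R n (m - (jv + 1)) else 0) j.1) := by
    intro j
    rw [← Finset.mul_sum, key j]
  rw [Finset.sum_congr rfl fun j _ => factor j, ← Finset.mul_sum]
  congr 1
  rw [Fin.sum_univ_eq_sum_range (fun jv => if jv + 1 ≤ m then faaS R n (m - (jv + 1)) else 0) n]
  rw [← Finset.sum_subset (Finset.range_subset_range.mpr hmn)
    (fun x _ hx => by simp only [mem_range, not_lt] at hx; rw [if_neg (by omega)])]
  apply Finset.sum_congr rfl
  intro j hj
  simp only [mem_range] at hj
  rw [if_pos (by omega)]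
  congr 1
  omega

lemma faaS_eq (R : ℝ) (n : ℕ) : ∀ m, 1 ≤ m → m ≤ n → faaS R n m = R * (R + 1) ^ (m - 1) := by
  intro m
  induction m using Nat.strong_induction_on with
  | _ m ih =>
    intro h1 h2
    obtain ⟨t, rfl⟩ : ∃ t, m = t + 1 := ⟨m - 1, by omega⟩
    rw [faaS_rec R n (t + 1) h1 h2]
    rw [Finset.sum_range_succ]
    simp only [Nat.add_sub_cancel, Nat.sub_self, faaS_zero]
    have hsum : ∑ j ∈ Finset.range t, faaS R n (t - j)
        = ∑ j ∈ Finset.range t, R * (R + 1) ^ (t - 1 - j) := by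
      apply Finset.sum_congr rfl
      intro j hj
      simp only [mem_range] at hj
      rw [ih (t - j) (by omega) (by omega) (by omega)]
      congr 2
      omega
    rw [hsum, Finset.sum_range_reflect (fun i => R * (R + 1) ^ i) t, ← Finset.mul_sum]
    have geom : (∑ i ∈ Finset.range t, (R + 1) ^ i) * R = (R + 1) ^ t - 1 := by
      have := geom_sum_mul (R + 1) t
      simpa using this
    have : R * ∑ i ∈ Finset.range t, (R + 1) ^ i = (R + 1) ^ t - 1 := by
      rw [mul_comm]; exact geom
    rw [this]
    ring

/-- **Faà di Bruno counting identity.** For every real `R > 0` and integer `n ≥ 1`,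
the sum over all tuples `(k₁,…,kₙ)` of nonnegative integers with
`k₁ + 2k₂ + ⋯ + n kₙ = n` of `(k₁+⋯+kₙ)!/(k₁!⋯kₙ!) · R^(k₁+⋯+kₙ)`
equals `R (R+1)^(n-1)`. (The values `kᵢ ≤ n` automatically, so we range over
`Fin n → Fin (n+1)`.) -/
theorem stmt_0 (R : ℝ) (hR : 0 < R) (n : ℕ) (hn : 1 ≤ n) :
    ∑ k ∈ Finset.univ.filter
        (fun k : Fin n → Fin (n + 1) => ∑ i, (i.1 + 1) * (k i).1 = n),
      ((Nat.factorial (∑ i, (k i).1) : ℝ) /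
          ∏ i, (Nat.factorial ((k i).1) : ℝ)) * R ^ (∑ i, (k i).1)
      = R * (R + 1) ^ (n - 1) := by
  have := faaS_eq R n n hn le_rfl
  rw [← this, faaS]
  apply Finset.sum_nbij' (fun (k : Fin n → Fin (n + 1)) (i : Fin n) => (k i).1)
    (fun (k : Fin n → ℕ) (i : Fin n) => (⟨k i % (n + 1), Nat.mod_lt _ (by omega)⟩ : Fin (n + 1)))
  · intro k hk
    simp only [mem_filter, mem_univ, true_and] at hk
    simp only [faaC, mem_filter, Fintype.mem_piFinset, mem_range]
    exact ⟨fun i => (k i).isLt, hk⟩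
  · intro k hk
    simp only [faaC, mem_filter, Fintype.mem_piFinset, mem_range] at hk
    obtain ⟨hpi, hsum⟩ := hk
    simp only [mem_filter, mem_univ, true_and]
    have hmod : ∀ i : Fin n, k i % (n + 1) = k i := fun i => Nat.mod_eq_of_lt (hpi i)
    simp only [hmod]
    exact hsum
  · intro k _
    funext i
    exact Fin.ext (Nat.mod_eq_of_lt (k i).isLt)
  · intro k hk
    simp only [faaC, mem_filter, Fintype.mem_piFinset, mem_range] at hk
    funext i
    exact Nat.mod_eq_of_lt (hk.1 i)
  · intro k _
    rfl
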